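/- Fix integers n ≥ 1, L ≥ 2 and d ≥ 0, and let x₁, …, x_n be i.i.d. uniform on the set μ_L = {e^{2πik/L} : k = 0, …, L−1} of L-th roots of unity. Then E[(Σ_{ℓ=1}^{L} |Σ_{j=1}^{n} x_j^ℓ|²)^d] = |M_d^{Z_L}|, where M_d^{Z_L} = {(ℓ, a, b) ∈ {1,…,L}^d × {1,…,n}^d × {1,…,n}^d : Σ_{j=1}^{d} ℓ_j (e_{a_j} − e_{b_j}) ≡ 0 (mod L) coordinatewise in ℤ^n}, with e_1, …, e_n the standard basis vectors of ℤ^n. -/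

import Mathlib

open MeasureTheory Filter
open scoped ENNReal


noncomputable def ee (L : ℕ) (m : ℤ) : ℂ :=
  Complex.exp (2 * (Real.pi : ℂ) * Complex.I * (m : ℂ) / (L : ℂ))

lemma ee_add (L : ℕ) (m m' : ℤ) : ee L (m + m') = ee L m * ee L m' := by
  rw [ee, ee, ee, ← Complex.exp_add]
  congr 1
  push_cast
  ring

lemma ee_sum (L : ℕ) {ι : Type*} (s : Finset ι) (f : ι → ℤ) :
    ee L (∑ i ∈ s, f i) = ∏ i ∈ s, ee L (f i) := by
  classical
  induction s using Finset.induction with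
  | empty => simp [ee]
  | insert _ _ h ih => rw [Finset.sum_insert h, Finset.prod_insert h, ee_add, ih]

lemma ee_conj (L : ℕ) (m : ℤ) : (starRingEnd ℂ) (ee L m) = ee L (-m) := by
  rw [ee, ee, ← Complex.exp_conj]
  congr 1
  simp [map_div₀, Complex.conj_I, map_ofNat]

lemma ee_nat_pow (L : ℕ) (m : ℤ) (p : ℕ) : ee L m ^ p = ee L (p * m) := by
  rw [ee, ee, ← Complex.exp_nat_mul]
  congr 1
  push_cast
  ring

lemma ee_geom (L : ℕ) (hL : 0 < L) (m : ℤ) :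
    ∑ k : Fin L, ee L (m * k) = if (L : ℤ) ∣ m then (L : ℂ) else 0 := by
  have hLC : (L : ℂ) ≠ 0 := Nat.cast_ne_zero.mpr hL.ne'
  have hExp : ∀ k : ℕ, ee L (m * k) = ee L m ^ k := by
    intro k
    rw [ee_nat_pow]
    congr 1
    ring
  have hsum : ∑ k : Fin L, ee L (m * k) = ∑ k ∈ Finset.range L, ee L m ^ k := by
    rw [← Fin.sum_univ_eq_sum_range (fun k => ee L m ^ k)]
    exact Finset.sum_congr rfl fun k _ => hExp k
  rw [hsum]
  by_cases hdvd : (L : ℤ) ∣ m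
  · obtain ⟨q, hq⟩ := id hdvd
    have h1 : ee L m = 1 := by
      rw [ee, hq]
      have : 2 * (Real.pi : ℂ) * Complex.I * ((L : ℤ) * q : ℤ) / (L : ℂ)
          = (q : ℂ) * (2 * (Real.pi : ℂ) * Complex.I) := by
        push_cast
        field_simp
      rw [this, Complex.exp_int_mul_two_pi_mul_I]
    rw [if_pos hdvd]
    simp [h1]
  · have hne : ee L m ≠ 1 := by
      intro h
      rw [ee, Complex.exp_eq_one_iff] at h
      obtain ⟨q, hq⟩ := h
      apply hdvd
      refine ⟨q, ?_⟩
      have h2pi : (2 : ℂ) * (Real.pi : ℂ) * Complex.I ≠ 0 := by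
        simp [Real.pi_ne_zero, Complex.I_ne_zero]
      rw [div_eq_iff hLC] at hq
      have h4 : (2 * (Real.pi : ℂ) * Complex.I) * (m : ℂ)
          = (2 * (Real.pi : ℂ) * Complex.I) * ((L : ℂ) * (q : ℂ)) := by
        linear_combination hq
      have h2 : (m : ℂ) = (L : ℂ) * (q : ℂ) := mul_left_cancel₀ h2pi h4
      exact_mod_cast h2
    rw [geom_sum_eq hne]
    have hL1 : ee L m ^ L = 1 := by
      rw [ee_nat_pow]
      rw [ee]
      have : 2 * (Real.pi : ℂ) * Complex.I * ((L * m : ℤ) : ℂ) / (L : ℂ)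
          = (m : ℂ) * (2 * (Real.pi : ℂ) * Complex.I) := by
        push_cast
        field_simp
      rw [this, Complex.exp_int_mul_two_pi_mul_I]
    rw [hL1]
    rw [if_neg hdvd]
    simp


lemma map_finset_sum_measure {α β ι : Type*} [MeasurableSpace α] [MeasurableSpace β]
    {f : α → β} (hf : Measurable f) (s : Finset ι) (μ : ι → Measure α) :
    (∑ i ∈ s, μ i).map f = ∑ i ∈ s, (μ i).map f := by
  classical
  induction s using Finset.induction with
  | empty => simp
  | insert _ _ h ih =>
    rename_i a s
    rw [Finset.sum_insert h, Finset.sum_insert h, Measure.map_add _ _ hf, ih]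

lemma integral_pi_roots (n L : ℕ) (hL : 0 < L)
    (μZ : Measure ℂ) [IsProbabilityMeasure μZ]
    (hμZ : μZ = (L : ℝ≥0∞)⁻¹ • ∑ k ∈ Finset.range L,
      Measure.dirac (Complex.exp (2 * (Real.pi : ℂ) * Complex.I * (k : ℂ) / (L : ℂ))))
    (f : (Fin n → ℂ) → ℝ) (hf : Continuous f) :
    ∫ x : Fin n → ℂ, f x ∂(Measure.pi fun _ => μZ)
      = ∑ a : Fin n → Fin L, ((L : ℝ)⁻¹) ^ n *
          f (fun i => Complex.exp (2 * (Real.pi : ℂ) * Complex.I * ((a i : ℕ) : ℂ) / (L : ℂ))) := by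
  classical
  set g : Fin L → ℂ := fun k =>
    Complex.exp (2 * (Real.pi : ℂ) * Complex.I * ((k : ℕ) : ℂ) / (L : ℂ)) with hg
  set ν : Measure (Fin L) := (L : ℝ≥0∞)⁻¹ • ∑ k : Fin L, Measure.dirac k with hν
  have hLne : (L : ℝ≥0∞) ≠ 0 := by exact_mod_cast hL.ne'
  have hνuniv : ν Set.univ = 1 := by
    simp [hν, Measure.smul_apply, smul_eq_mul]
    rw [ENNReal.inv_mul_cancel hLne (by simp)]
  haveI : IsProbabilityMeasure ν := ⟨hνuniv⟩
  have hgmeas : Measurable g := measurable_of_countable g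
  have hmap : ν.map g = μZ := by
    rw [hν, hμZ]
    rw [Measure.map_smul, map_finset_sum_measure hgmeas]
    congr 1
    rw [← Fin.sum_univ_eq_sum_range
      (fun k => Measure.dirac (Complex.exp (2 * (Real.pi : ℂ) * Complex.I * (k : ℂ) / (L : ℂ)))) L]
    exact Finset.sum_congr rfl fun k _ => Measure.map_dirac' hgmeas k
  have hmp : MeasurePreserving (fun a : Fin n → Fin L => fun i => g (a i))
      (Measure.pi fun _ => ν) (Measure.pi fun _ => μZ) :=
    measurePreserving_pi _ _ (fun _ => ⟨hgmeas, hmap⟩)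
  rw [← hmp.map_eq, integral_map hmp.measurable.aemeasurable
    (hf.stronglyMeasurable.aestronglyMeasurable)]
  rw [integral_fintype Integrable.of_finite]
  refine Finset.sum_congr rfl fun a _ => ?_
  have hsingle : (Measure.pi fun _ : Fin n => ν) {a} = ((L : ℝ≥0∞)⁻¹) ^ n := by
    rw [← Set.univ_pi_singleton a, Measure.pi_pi]
    have : ∀ i : Fin n, ν {a i} = (L : ℝ≥0∞)⁻¹ := by
      intro i
      simp [hν, Measure.smul_apply, Measure.dirac_apply, Set.indicator]
    simp [this]
  rw [Measure.real, hsingle]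
  rw [ENNReal.toReal_pow, ENNReal.toReal_inv]
  simp [smul_eq_mul, hg]

-- step 1 : per `a`, express the real quantity as a complex sum over an index finset
lemma step1 (n L : ℕ) (d : ℕ) (a : Fin n → Fin L) :
    (((∑ ℓ ∈ Finset.Icc 1 L,
        ‖∑ j : Fin n,
          Complex.exp (2 * (Real.pi : ℂ) * Complex.I * ((a j : ℕ) : ℂ) / (L : ℂ)) ^ ℓ‖ ^ 2) ^ d : ℝ) : ℂ)
    = (∑ c ∈ (Finset.Icc 1 L) ×ˢ (Finset.univ : Finset (Fin n × Fin n)),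
        ee L ((c.1 : ℤ) * ((a c.2.1 : ℤ) - (a c.2.2 : ℤ)))) ^ d := by
  classical
  have hg : ∀ (j : Fin n) (ℓ : ℕ),
      Complex.exp (2 * (Real.pi : ℂ) * Complex.I * ((a j : ℕ) : ℂ) / (L : ℂ)) ^ ℓ
        = ee L (ℓ * (a j : ℤ)) := by
    intro j ℓ
    rw [show Complex.exp (2 * (Real.pi : ℂ) * Complex.I * ((a j : ℕ) : ℂ) / (L : ℂ))
        = ee L ((a j : ℕ) : ℤ) by rw [ee]; push_cast; ring_nf]
    rw [ee_nat_pow]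
  push_cast
  rw [Finset.sum_product]
  congr 1
  refine Finset.sum_congr rfl fun ℓ _ => ?_
  have habs : ∀ z : ℂ, ((‖z‖ : ℝ) : ℂ) ^ 2 = z * (starRingEnd ℂ) z := by
    intro z
    rw [← Complex.ofReal_pow, Complex.sq_norm, Complex.mul_conj]
  rw [habs]
  have hz : (∑ j : Fin n,
      Complex.exp (2 * (Real.pi : ℂ) * Complex.I * ((a j : ℕ) : ℂ) / (L : ℂ)) ^ ℓ)
      = ∑ j : Fin n, ee L (ℓ * (a j : ℤ)) := Finset.sum_congr rfl fun j _ => hg j ℓ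
  rw [hz, map_sum]
  rw [Finset.sum_mul_sum]
  rw [← Finset.sum_product']
  rw [Finset.univ_product_univ]
  refine Finset.sum_congr rfl fun p _ => ?_
  rw [ee_conj, ← ee_add]
  congr 1
  ring

-- the coefficient of site `s`
def mcoef (L : ℕ) {n d : ℕ} (u : Fin d → ℕ × Fin n × Fin n) (s : Fin n) : ℤ :=
  ∑ j, ((u j).1 : ℤ) * ((if (u j).2.1 = s then 1 else 0) - (if (u j).2.2 = s then 1 else 0))

lemma step3 (n L d : ℕ) (hL : 0 < L) :
    ∑ a : Fin n → Fin L,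
      (∑ c ∈ (Finset.Icc 1 L) ×ˢ (Finset.univ : Finset (Fin n × Fin n)),
        ee L ((c.1 : ℤ) * ((a c.2.1 : ℤ) - (a c.2.2 : ℤ)))) ^ d
    = ∑ u ∈ Fintype.piFinset (fun _ : Fin d =>
        (Finset.Icc 1 L) ×ˢ (Finset.univ : Finset (Fin n × Fin n))),
        (if ∀ s : Fin n, (L : ℤ) ∣ mcoef L u s then (L : ℂ) ^ n else 0) := by
  classical
  have hpow : ∀ a : Fin n → Fin L,
      (∑ c ∈ (Finset.Icc 1 L) ×ˢ (Finset.univ : Finset (Fin n × Fin n)),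
        ee L ((c.1 : ℤ) * ((a c.2.1 : ℤ) - (a c.2.2 : ℤ)))) ^ d
      = ∑ u ∈ Fintype.piFinset (fun _ : Fin d =>
          (Finset.Icc 1 L) ×ˢ (Finset.univ : Finset (Fin n × Fin n))),
          ∏ j : Fin d, ee L (((u j).1 : ℤ) * ((a (u j).2.1 : ℤ) - (a (u j).2.2 : ℤ))) := by
    intro a
    calc (∑ c ∈ (Finset.Icc 1 L) ×ˢ (Finset.univ : Finset (Fin n × Fin n)),
          ee L ((c.1 : ℤ) * ((a c.2.1 : ℤ) - (a c.2.2 : ℤ)))) ^ d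
        = ∏ _j : Fin d, ∑ c ∈ (Finset.Icc 1 L) ×ˢ (Finset.univ : Finset (Fin n × Fin n)),
            ee L ((c.1 : ℤ) * ((a c.2.1 : ℤ) - (a c.2.2 : ℤ))) := by
          rw [Finset.prod_const, Finset.card_univ, Fintype.card_fin]
      _ = _ := Finset.prod_univ_sum (fun _ : Fin d => (Finset.Icc 1 L) ×ˢ (Finset.univ : Finset (Fin n × Fin n)))
            (fun _ c => ee L ((c.1 : ℤ) * ((a c.2.1 : ℤ) - (a c.2.2 : ℤ))))
  simp_rw [hpow]
  rw [Finset.sum_comm]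
  refine Finset.sum_congr rfl fun u _ => ?_
  have hprod : ∀ a : Fin n → Fin L,
      ∏ j : Fin d, ee L (((u j).1 : ℤ) * ((a (u j).2.1 : ℤ) - (a (u j).2.2 : ℤ)))
      = ∏ s : Fin n, ee L (mcoef L u s * (a s : ℤ)) := by
    intro a
    rw [← ee_sum, ← ee_sum]
    congr 1
    have hδ : ∀ (x : Fin n), ∑ s : Fin n, (if x = s then (1:ℤ) else 0) * (a s : ℤ) = (a x : ℤ) := by
      intro x
      simp [ite_mul]
    calc ∑ j : Fin d, ((u j).1 : ℤ) * ((a (u j).2.1 : ℤ) - (a (u j).2.2 : ℤ))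
        = ∑ j : Fin d, ∑ s : Fin n, ((u j).1 : ℤ) *
            ((if (u j).2.1 = s then (1:ℤ) else 0) - (if (u j).2.2 = s then (1:ℤ) else 0)) * (a s : ℤ) := by
          refine Finset.sum_congr rfl fun j _ => ?_
          have h1 : ∑ s : Fin n, ((u j).1 : ℤ) *
              ((if (u j).2.1 = s then (1:ℤ) else 0) - (if (u j).2.2 = s then (1:ℤ) else 0)) * (a s : ℤ)
              = ((u j).1 : ℤ) * (∑ s : Fin n, (if (u j).2.1 = s then (1:ℤ) else 0) * (a s : ℤ)
                - ∑ s : Fin n, (if (u j).2.2 = s then (1:ℤ) else 0) * (a s : ℤ)) := by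
            rw [← Finset.sum_sub_distrib, Finset.mul_sum]
            refine Finset.sum_congr rfl fun s _ => ?_
            ring
          rw [h1, hδ, hδ]
      _ = ∑ s : Fin n, mcoef L u s * (a s : ℤ) := by
          rw [Finset.sum_comm]
          refine Finset.sum_congr rfl fun s _ => ?_
          rw [mcoef, Finset.sum_mul]
  simp_rw [hprod]
  rw [← Fintype.prod_sum (fun s (v : Fin L) => ee L (mcoef L u s * (v : ℤ)))]
  by_cases h : ∀ s : Fin n, (L : ℤ) ∣ mcoef L u s
  · rw [if_pos h]
    have : ∀ s : Fin n, ∑ v : Fin L, ee L (mcoef L u s * (v : ℤ)) = (L : ℂ) := by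
      intro s
      rw [ee_geom L hL, if_pos (h s)]
    simp [this]
  · rw [if_neg h]
    push_neg at h
    obtain ⟨s₀, hs₀⟩ := h
    refine Finset.prod_eq_zero (Finset.mem_univ s₀) ?_
    rw [ee_geom L hL, if_neg hs₀]

open Classical in
lemma count_eq (n L d : ℕ) :
    (((Fintype.piFinset (fun _ : Fin d =>
        (Finset.Icc 1 L) ×ˢ (Finset.univ : Finset (Fin n × Fin n)))).filter
      (fun u => ∀ s : Fin n, (L : ℤ) ∣ mcoef L u s)).card : ℕ)
    = Nat.card {t : (Fin d → ℕ) × (Fin d → Fin n) × (Fin d → Fin n) //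
        (∀ j, t.1 j ∈ Finset.Icc 1 L) ∧
        ∀ s : Fin n, (L : ℤ) ∣ (∑ j, (t.1 j : ℤ) *
          ((if t.2.1 j = s then 1 else 0) - (if t.2.2 j = s then 1 else 0)))} := by
  rw [← Nat.card_eq_finsetCard]
  refine Nat.card_congr ?_
  exact
  { toFun := fun x => ⟨(fun j => (x.1 j).1, fun j => (x.1 j).2.1, fun j => (x.1 j).2.2), by
      obtain ⟨u, hu⟩ := x
      simp only [Finset.mem_filter, Fintype.mem_piFinset, Finset.mem_product] at hu
      exact ⟨fun j => (hu.1 j).1, hu.2⟩⟩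
    invFun := fun t => ⟨fun j => (t.1.1 j, t.1.2.1 j, t.1.2.2 j), by
      obtain ⟨⟨ℓv, av, bv⟩, hℓ, hdvd⟩ := t
      simp only [Finset.mem_filter, Fintype.mem_piFinset, Finset.mem_product]
      exact ⟨fun j => ⟨hℓ j, Finset.mem_univ _⟩, hdvd⟩⟩
    left_inv := fun x => rfl
    right_inv := fun t => rfl }


theorem stmt4 (n L d : ℕ) (hn : 1 ≤ n) (hL : 2 ≤ L)
    (μZ : Measure ℂ) [IsProbabilityMeasure μZ]
    (hμZ : μZ = (L : ℝ≥0∞)⁻¹ • ∑ k ∈ Finset.range L,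
      Measure.dirac (Complex.exp (2 * (Real.pi : ℂ) * Complex.I * (k : ℂ) / (L : ℂ)))) :
    ∫ x : Fin n → ℂ, (∑ ℓ ∈ Finset.Icc 1 L, ‖∑ j, x j ^ ℓ‖ ^ 2) ^ d
        ∂(Measure.pi fun _ => μZ)
    = (Nat.card {t : (Fin d → ℕ) × (Fin d → Fin n) × (Fin d → Fin n) //
        (∀ j, t.1 j ∈ Finset.Icc 1 L) ∧
        ∀ s : Fin n, (L : ℤ) ∣ (∑ j, (t.1 j : ℤ) *
          ((if t.2.1 j = s then 1 else 0) - (if t.2.2 j = s then 1 else 0)))} : ℝ) := by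
  classical
  have hL0 : 0 < L := lt_of_lt_of_le two_pos hL
  have hLR : (L : ℝ) ≠ 0 := Nat.cast_ne_zero.mpr hL0.ne'
  have hf : Continuous (fun x : Fin n → ℂ =>
      (∑ ℓ ∈ Finset.Icc 1 L, ‖∑ j, x j ^ ℓ‖ ^ 2) ^ d) := by
    apply Continuous.pow
    apply continuous_finset_sum
    intro ℓ _
    exact (continuous_norm.comp
      (continuous_finset_sum _ fun j _ => (continuous_apply j).pow ℓ)).pow 2
  rw [integral_pi_roots n L hL0 μZ hμZ _ hf]
  simp only []
  set S : ℕ := ((Fintype.piFinset (fun _ : Fin d =>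
      (Finset.Icc 1 L) ×ˢ (Finset.univ : Finset (Fin n × Fin n)))).filter
      (fun u => ∀ s : Fin n, (L : ℤ) ∣ mcoef L u s)).card with hS
  have hsum : ∑ a : Fin n → Fin L, (∑ ℓ ∈ Finset.Icc 1 L,
      ‖∑ j : Fin n,
        Complex.exp (2 * (Real.pi : ℂ) * Complex.I * ((a j : ℕ) : ℂ) / (L : ℂ)) ^ ℓ‖ ^ 2) ^ d
      = (L : ℝ) ^ n * (S : ℝ) := by
    have hC : ((∑ a : Fin n → Fin L, (∑ ℓ ∈ Finset.Icc 1 L,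
        ‖∑ j : Fin n,
          Complex.exp (2 * (Real.pi : ℂ) * Complex.I * ((a j : ℕ) : ℂ) / (L : ℂ)) ^ ℓ‖ ^ 2) ^ d : ℝ) : ℂ)
        = (((L : ℝ) ^ n * (S : ℝ) : ℝ) : ℂ) := by
      push_cast
      calc ∑ a : Fin n → Fin L, ((∑ ℓ ∈ Finset.Icc 1 L,
            ((‖∑ j : Fin n,
              Complex.exp (2 * (Real.pi : ℂ) * Complex.I * ((a j : ℕ) : ℂ) / (L : ℂ)) ^ ℓ‖ : ℝ) : ℂ) ^ 2) ^ d)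
          = ∑ a : Fin n → Fin L,
              (∑ c ∈ (Finset.Icc 1 L) ×ˢ (Finset.univ : Finset (Fin n × Fin n)),
                ee L ((c.1 : ℤ) * ((a c.2.1 : ℤ) - (a c.2.2 : ℤ)))) ^ d := by
            refine Finset.sum_congr rfl fun a _ => ?_
            have := step1 n L d a
            push_cast at this
            exact this
        _ = ∑ u ∈ Fintype.piFinset (fun _ : Fin d =>
              (Finset.Icc 1 L) ×ˢ (Finset.univ : Finset (Fin n × Fin n))),
              (if ∀ s : Fin n, (L : ℤ) ∣ mcoef L u s then (L : ℂ) ^ n else 0) :=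
            step3 n L d hL0
        _ = (L : ℂ) ^ n * (S : ℂ) := by
            rw [Finset.sum_ite, Finset.sum_const, Finset.sum_const_zero, add_zero,
              nsmul_eq_mul, mul_comm, hS]
    exact_mod_cast hC
  rw [← Finset.mul_sum, hsum, hS, count_eq n L d]
  have hone : ((L : ℝ)⁻¹) ^ n * (L : ℝ) ^ n = 1 := by
    rw [← mul_pow, inv_mul_cancel₀ hLR, one_pow]
  rw [← mul_assoc, hone, one_mul]
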